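/- arXiv:1505.07915 — 2 statements merged into one kernel-verified Lean document; each statement's English description precedes it below -/
import Mathlib

section
/- Let X be a Gamma(p, θ) random variable with density f(x) = x^{p-1} e^{-x/θ} / (θ^p Γ(p)) for x > 0, and let u : ℝ → ℝ be a measurable function with E[|u(X)|] < ∞ and ∫_0^x u(t) t^{p-1} dt finite for all x > 0. Define ν(x) = x^{-(p-1)} ∫_0^x u(t) t^{p-1} dt. Then E[ν(X)] = θ · E[u(X)]. -/
open MeasureTheory Real

open Set Filter
lemma exp_int_Ioi (θ : ℝ) (hθ : 0 < θ) (t : ℝ) :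
    ∫ x in Ioi t, Real.exp (-x / θ) = θ * Real.exp (-t / θ) := by
  have h := integral_Ioi_of_hasDerivAt_of_tendsto (f := fun x => -θ * Real.exp (-x / θ))
      (f' := fun x => Real.exp (-x / θ)) (a := t) (m := 0)
      ((by fun_prop : Continuous fun x : ℝ => -θ * Real.exp (-x / θ)).continuousWithinAt) ?_ ?_ ?_
  · rw [h]; ring
  · intro x hx
    have : HasDerivAt (fun x : ℝ => -x / θ) (-1 / θ) x := by
      simpa using ((hasDerivAt_id x).neg.div_const θ)
    have := (this.exp).const_mul (-θ)
    convert this using 1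
    · rfl
    · field_simp
  · have : (fun x : ℝ => Real.exp (-x / θ)) = fun x => Real.exp (-(1/θ) * x) := by
      ext x; ring_nf
    rw [this]
    exact exp_neg_integrableOn_Ioi t (by positivity)
  · have h1 : Tendsto (fun x : ℝ => (1/θ) * x) atTop atTop :=
      Tendsto.const_mul_atTop (by positivity) tendsto_id
    have h2 : Tendsto (fun x : ℝ => Real.exp (-x / θ)) atTop (nhds 0) := by
      have := tendsto_exp_neg_atTop_nhds_zero.comp h1
      refine this.congr fun x => ?_
      simp only [Function.comp_apply]; ring_nf
    have := h2.const_mul (-θ)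
    simpa using this

/-- Robbins U-V identity for the Gamma(p, θ) family. -/
theorem robbins_gamma
    (p θ : ℝ) (hp : 0 < p) (hθ : 0 < θ)
    (μ : Measure ℝ)
    (hμ : μ = volume.withDensity (fun x =>
      ENNReal.ofReal (if 0 < x then x ^ (p - 1) * Real.exp (-x / θ) / (θ ^ p * Real.Gamma p) else 0)))
    (u : ℝ → ℝ) (hu_meas : Measurable u)
    (hu_int : Integrable u μ)
    (hfin : ∀ x : ℝ, 0 < x → IntervalIntegrable (fun t => u t * t ^ (p - 1)) volume 0 x)
    (ν : ℝ → ℝ)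
    (hν : ∀ x : ℝ, ν x = x ^ (-(p - 1)) * ∫ t in (0:ℝ)..x, u t * t ^ (p - 1)) :
    ∫ x, ν x ∂μ = θ * ∫ x, u x ∂μ := by
  set C : ℝ := θ ^ p * Real.Gamma p with hC_def
  have hC : 0 < C := mul_pos (rpow_pos_of_pos hθ p) (Real.Gamma_pos_of_pos hp)
  set d : ℝ → ℝ := fun x => if 0 < x then x ^ (p - 1) * Real.exp (-x / θ) / C else 0 with hd_def
  have hd_meas : Measurable d := by
    apply Measurable.ite measurableSet_Ioi _ measurable_const
    fun_prop
  have hd_nonneg : ∀ x, 0 ≤ d x := by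
    intro x
    simp only [hd_def]
    split_ifs with h
    · positivity
    · exact le_rfl
  -- transfer integrals
  have htrans : ∀ g : ℝ → ℝ, ∫ x, g x ∂μ = ∫ x, g x * d x := by
    intro g
    have hμ' : μ = volume.withDensity (fun x => ((Real.toNNReal (d x) : NNReal) : ENNReal)) := by
      rw [hμ]; rfl
    have hdn : Measurable (fun x => Real.toNNReal (d x)) := hd_meas.real_toNNReal
    rw [hμ', integral_withDensity_eq_integral_smul hdn g]
    congr 1; ext x
    simp [NNReal.smul_def, Real.coe_toNNReal _ (hd_nonneg x), mul_comm]
  -- integrability transfer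
  have hint : Integrable (fun x => u x * d x) volume := by
    rw [hμ] at hu_int
    rw [integrable_withDensity_iff (by exact hd_meas.ennreal_ofReal)
      (by filter_upwards with x using ENNReal.ofReal_lt_top)] at hu_int
    refine hu_int.congr (Filter.Eventually.of_forall fun x => ?_)
    show u x * (ENNReal.ofReal (d x)).toReal = u x * d x
    rw [ENNReal.toReal_ofReal (hd_nonneg x)]
    -- f and its exponential-weighted integrability on (0,∞)
  set f : ℝ → ℝ := fun t => u t * t ^ (p - 1) with hf_def
  have hf_meas : Measurable f := by
    apply hu_meas.mul
    exact measurable_id.pow_const _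
  set R : Measure ℝ := volume.restrict (Ioi 0) with hR
  have hud : ∀ t : ℝ, 0 < t → C * (u t * d t) = f t * Real.exp (-t / θ) := by
    intro t ht
    simp only [hd_def, if_pos ht, hf_def]
    field_simp
  have K : Integrable (fun t => f t * Real.exp (-t / θ)) R := by
    refine ((hint.restrict (s := Ioi 0)).const_mul C).congr
      ((ae_restrict_iff' measurableSet_Ioi).2 ?_)
    filter_upwards with t ht
    exact hud t ht
  -- the double integrand
  set H : ℝ × ℝ → ℝ := fun q => if q.2 ≤ q.1 then Real.exp (-q.1 / θ) * f q.2 else 0 with hH_def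
  have hH_meas : Measurable H := by
    apply Measurable.ite (measurableSet_le measurable_snd measurable_fst) _ measurable_const
    exact ((measurable_fst.neg.div_const θ).exp.mul (hf_meas.comp measurable_snd))
  have hexpR : Integrable (fun x => Real.exp (-x / θ)) R := by
    have := exp_neg_integrableOn_Ioi (0 : ℝ) (b := 1/θ) (by positivity)
    refine this.congr_fun ?_ measurableSet_Ioi
    intro x _
    ring_nf
  -- the inner x-integral
  have hxint : ∀ t : ℝ, 0 < t → ∀ c : ℝ,
      (∫ x, (if t ≤ x then Real.exp (-x / θ) * c else 0) ∂ R) = θ * Real.exp (-t / θ) * c := by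
    intro t ht c
    have h1 : (fun x => (if t ≤ x then Real.exp (-x / θ) * c else 0))
        = Set.indicator (Ici t) (fun x => Real.exp (-x / θ) * c) := by
      ext x; simp [Set.indicator_apply, mem_Ici]
    have hset : Ioi (0:ℝ) ∩ Ici t = Ici t := by
      rw [inter_eq_right]; exact fun x hx => lt_of_lt_of_le ht hx
    rw [hR, h1, setIntegral_indicator measurableSet_Ici, hset,
      integral_mul_const, integral_Ici_eq_integral_Ioi, exp_int_Ioi θ hθ t]
  have hHt : ∀ t : ℝ, 0 < t → Integrable (fun x => H (x, t)) R := by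
    intro t ht
    have base : Integrable (fun x => Real.exp (-x / θ) * f t) R := hexpR.mul_const _
    refine (base.indicator (measurableSet_Ici (a := t))).congr ?_
    filter_upwards with x
    simp [hH_def, Set.indicator_apply, mem_Ici]
  have Hint : Integrable H (R.prod R) := by
    rw [integrable_prod_iff' hH_meas.aestronglyMeasurable]
    constructor
    · rw [ae_restrict_iff' measurableSet_Ioi]
      filter_upwards with t ht
      exact hHt t ht
    · refine (K.norm.const_mul θ).congr ((ae_restrict_iff' measurableSet_Ioi).2 ?_)
      filter_upwards with t ht
      have h1 : (fun x => ‖H (x, t)‖) = fun x => (if t ≤ x then Real.exp (-x / θ) * |f t| else 0) := by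
        ext x
        simp only [hH_def]
        split_ifs with h
        · rw [Real.norm_eq_abs, abs_mul, abs_of_pos (Real.exp_pos _)]
        · simp
      rw [h1, hxint t ht]
      rw [Real.norm_eq_abs, abs_mul, abs_of_pos (Real.exp_pos _)]
      ring
  have swap := integral_integral_swap (f := fun x t => H (x, t)) (μ := R) (ν := R) Hint
  -- pointwise identity for ν
  have hνpt : ∀ x : ℝ, 0 < x → ν x * d x = C⁻¹ * ∫ t, H (x, t) ∂ R := by
    intro x hx
    have h1 : (fun t => H (x, t)) = Set.indicator (Iic x) (fun t => Real.exp (-x / θ) * f t) := by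
      ext t; simp [hH_def, Set.indicator_apply, mem_Iic]
    have h2 : (∫ t, H (x, t) ∂ R) = Real.exp (-x / θ) * ∫ t in (0:ℝ)..x, f t := by
      rw [hR, h1, setIntegral_indicator measurableSet_Iic, Ioi_inter_Iic,
        intervalIntegral.integral_of_le hx.le, integral_const_mul]
    rw [h2, hν x]
    simp only [hd_def, if_pos hx]
    have h3 : x ^ (-(p-1)) * x ^ (p-1) = 1 := by
      rw [← rpow_add hx]; simp
    linear_combination (Real.exp (-x/θ) * (∫ t in (0:ℝ)..x, f t) / C) * h3
  calc ∫ x, ν x ∂μ = ∫ x, ν x * d x := htrans ν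
    _ = ∫ x in Ioi 0, ν x * d x := by
        refine (setIntegral_eq_integral_of_forall_compl_eq_zero fun x hx => ?_).symm
        have : d x = 0 := by simp only [hd_def]; rw [if_neg (by simpa using hx)]
        rw [this, mul_zero]
    _ = ∫ x in Ioi 0, C⁻¹ * ∫ t, H (x, t) ∂ R := by
        refine setIntegral_congr_fun measurableSet_Ioi fun x hx => hνpt x hx
    _ = C⁻¹ * ∫ x, (∫ t, H (x, t) ∂ R) ∂ R := by rw [hR, integral_const_mul]
    _ = C⁻¹ * ∫ t, (∫ x, H (x, t) ∂ R) ∂ R := by rw [swap]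
    _ = C⁻¹ * ∫ t in Ioi 0, θ * (C * (u t * d t)) := by
        rw [hR]
        congr 1
        refine setIntegral_congr_fun measurableSet_Ioi fun t ht => ?_
        have h1 : (fun x => H (x, t)) = fun x => (if t ≤ x then Real.exp (-x / θ) * f t else 0) := by
          ext x; simp [hH_def]
        rw [h1, hxint t ht, hud t ht]
        ring
    _ = θ * ∫ x, u x ∂μ := by
        rw [htrans u]
        have h4 : ∫ t in Ioi 0, θ * (C * (u t * d t)) = (θ * C) * ∫ t in Ioi 0, u t * d t := by
          rw [← integral_const_mul]; congr 1; ext t; ring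
        rw [h4, setIntegral_eq_integral_of_forall_compl_eq_zero
          (s := Ioi (0:ℝ)) (fun x hx => by
            have : d x = 0 := by simp only [hd_def]; rw [if_neg (by simpa using hx)]
            rw [this, mul_zero])]
        field_simp
end

section
/- The double integral ∫_{−∞}^∞ ∫_{−∞}^∞ [min(Φ(x), Φ(y)) − Φ(x)Φ(y)] dx dy equals 1, where Φ is the standard normal cdf. -/
open MeasureTheory ProbabilityTheory Real Filter Set Topology

noncomputable def FHP : ℝ → ℝ := gaussianPDFReal 0 1

lemma FHP_def (t : ℝ) : FHP t = (Real.sqrt (2 * π))⁻¹ * Real.exp (-(t ^ 2) / 2) := by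
  simp [FHP, gaussianPDFReal]

lemma FHP_cont : Continuous FHP := by
  simp only [funext FHP_def]
  fun_prop

lemma FHP_nonneg (t : ℝ) : 0 ≤ FHP t := gaussianPDFReal_nonneg 0 1 t

lemma FHP_integrable : Integrable FHP := integrable_gaussianPDFReal 0 1

lemma FHP_even (t : ℝ) : FHP (-t) = FHP t := by
  simp [FHP_def]

lemma FHP_deriv (t : ℝ) : HasDerivAt FHP (-t * FHP t) t := by
  have h1 : HasDerivAt (fun s : ℝ => -(s ^ 2) / 2) (-t) t := by
    have := ((hasDerivAt_pow 2 t).neg).div_const 2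
    refine this.congr_deriv ?_
    ring
  have h2 := (h1.exp).const_mul (Real.sqrt (2 * π))⁻¹
  have : (fun s : ℝ => (Real.sqrt (2 * π))⁻¹ * Real.exp (-(s ^ 2) / 2)) = FHP :=
    (funext FHP_def).symm
  rw [this] at h2
  refine h2.congr_deriv ?_
  rw [FHP_def]
  ring

lemma FHP_tendsto_top : Tendsto FHP atTop (𝓝 0) := by
  have h1 : Tendsto (fun t : ℝ => -(t ^ 2) / 2) atTop atBot := by
    apply Tendsto.atBot_div_const (by norm_num : (0:ℝ) < 2)
    exact tendsto_neg_atTop_atBot.comp (tendsto_pow_atTop two_ne_zero)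
  have h2 : Tendsto (fun t : ℝ => Real.exp (-(t ^ 2) / 2)) atTop (𝓝 0) :=
    Real.tendsto_exp_atBot.comp h1
  have h3 := h2.const_mul (Real.sqrt (2 * π))⁻¹
  rw [mul_zero] at h3
  exact h3.congr (fun t => (FHP_def t).symm)

/-- The Hoeffding covariance integral for the upper Fréchet–Hoeffding bound with
standard normal marginals equals 1. -/
theorem frechet_hoeffding_normal_integral
    (Φ : ℝ → ℝ)
    (hΦ : ∀ x : ℝ, Φ x = ∫ t in Set.Iic x, gaussianPDFReal 0 1 t) :
    ∫ x : ℝ, ∫ y : ℝ, (min (Φ x) (Φ y) - Φ x * Φ y) = 1 := by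
  have hΦ' : ∀ x : ℝ, Φ x = ∫ t in Set.Iic x, FHP t := hΦ
  have hint : Integrable FHP := FHP_integrable
  have htotal : ∫ t, FHP t = 1 := integral_gaussianPDFReal_eq_one 0 one_ne_zero
  -- monotonicity and bounds
  have hmono : Monotone Φ := by
    intro a b hab
    rw [hΦ' a, hΦ' b]
    exact setIntegral_mono_set hint.integrableOn
      (ae_restrict_of_ae (ae_of_all _ FHP_nonneg))
      (HasSubset.Subset.eventuallyLE (Iic_subset_Iic.2 hab))
  have hΦ0 : ∀ x, 0 ≤ Φ x := by
    intro x
    rw [hΦ' x]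
    exact setIntegral_nonneg measurableSet_Iic fun t _ => FHP_nonneg t
  -- tendsto at top
  have htop : Tendsto Φ atTop (𝓝 1) := by
    have h := tendsto_setIntegral_of_monotone (μ := volume) (f := FHP)
      (s := fun x : ℝ => Iic x) (fun i => measurableSet_Iic)
      (fun a b hab => Iic_subset_Iic.2 hab)
      (by rw [Set.iUnion_Iic]; exact hint.integrableOn)
    rw [Set.iUnion_Iic, setIntegral_univ, htotal] at h
    exact h.congr (fun x => (hΦ' x).symm)
  -- splitting: tail integral of the density
  have hIoiP : ∀ x : ℝ, ∫ t in Ioi x, FHP t = 1 - Φ x := by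
    intro x
    have := intervalIntegral.integral_Iic_add_Ioi (b := x) hint.integrableOn hint.integrableOn
    rw [htotal, ← hΦ' x] at this
    linarith
  -- symmetry
  have hsym : ∀ x, Φ (-x) = 1 - Φ x := by
    intro x
    have h2 : Φ (-x) = ∫ t in Ioi x, FHP t := by
      rw [hΦ' (-x)]
      calc ∫ t in Iic (-x), FHP t = ∫ t in Iic (-x), FHP (-t) := by
            apply setIntegral_congr_fun measurableSet_Iic
            intro t _
            exact (FHP_even t).symm
        _ = ∫ t in Ioi x, FHP t := by
            simpa using integral_comp_neg_Iic (-x) FHP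
    rw [h2, hIoiP]
  have hsym' : ∀ x, Φ x = 1 - Φ (-x) := by
    intro x
    have := hsym x
    linarith
  have hΦ1 : ∀ x, Φ x ≤ 1 := by
    intro x
    have := hsym x
    have := hΦ0 (-x)
    linarith
  -- derivative of Φ
  have hd : ∀ x, HasDerivAt Φ (FHP x) x := by
    intro x
    have h0 : Φ = fun y => Φ 0 + ∫ t in (0:ℝ)..y, FHP t := by
      funext y
      have := intervalIntegral.integral_Iic_sub_Iic (μ := volume) (f := FHP) (a := (0:ℝ)) (b := y)
        hint.integrableOn hint.integrableOn
      rw [← hΦ' y, ← hΦ' 0] at this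
      linarith
    have hds := (FHP_cont.integral_hasStrictDerivAt 0 x).hasDerivAt
    rw [h0]
    exact hds.const_add (Φ 0)
  -- tail integral of t * FHP t for a ≥ 0
  have hdP : ∀ t : ℝ, HasDerivAt (fun s => -FHP s) (t * FHP t) t := by
    intro t
    have := (FHP_deriv t).neg
    refine this.congr_deriv ?_
    ring
  have hnegP_top : Tendsto (fun s : ℝ => -FHP s) atTop (𝓝 0) := by
    have := FHP_tendsto_top.neg
    rwa [neg_zero] at this
  have htail : ∀ a : ℝ, 0 ≤ a →
      IntegrableOn (fun t => t * FHP t) (Ioi a) ∧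
      ∫ t in Ioi a, t * FHP t = FHP a := by
    intro a ha
    have hpos : ∀ t ∈ Ioi a, 0 ≤ t * FHP t := fun t ht =>
      mul_nonneg (le_trans ha (le_of_lt ht)) (FHP_nonneg t)
    refine ⟨integrableOn_Ioi_deriv_of_nonneg' (fun t _ => hdP t) hpos hnegP_top, ?_⟩
    have := integral_Ioi_of_hasDerivAt_of_nonneg' (fun t _ => hdP t) hpos hnegP_top
    rw [this]
    ring
  -- Mills-type bound and the limit of y * (1 - Φ y) at +∞
  have hmillsTop : Tendsto (fun y => y * (1 - Φ y)) atTop (𝓝 0) := by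
    apply tendsto_of_tendsto_of_tendsto_of_le_of_le' tendsto_const_nhds FHP_tendsto_top
    · filter_upwards [eventually_ge_atTop (0:ℝ)] with y hy
      exact mul_nonneg hy (by linarith [hΦ1 y])
    · filter_upwards [eventually_ge_atTop (0:ℝ)] with y hy
      have h1 : y * (1 - Φ y) = ∫ t in Ioi y, y * FHP t := by
        rw [integral_const_mul, hIoiP]
      rw [h1]
      have h2 := (htail y hy).2
      rw [← h2]
      apply setIntegral_mono_on (hint.const_mul y).integrableOn (htail y hy).1
        measurableSet_Ioi
      intro t ht
      exact mul_le_mul_of_nonneg_right (le_of_lt ht) (FHP_nonneg t)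
  -- the limit of y * Φ y at -∞
  have hmillsBot : Tendsto (fun y => y * Φ y) atBot (𝓝 0) := by
    have h1 : Tendsto (fun y : ℝ => (-y) * (1 - Φ (-y))) atBot (𝓝 0) :=
      hmillsTop.comp tendsto_neg_atBot_atTop
    have h2 := h1.neg
    rw [neg_zero] at h2
    apply h2.congr
    intro y
    rw [hsym' y]
    ring
  -- integral of 1 - Φ on Ioi a
  have hIoi1Φ : ∀ a : ℝ, IntegrableOn (fun y => 1 - Φ y) (Ioi a) ∧
      ∫ y in Ioi a, (1 - Φ y) = FHP a - a * (1 - Φ a) := by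
    intro a
    have hg' : ∀ y : ℝ, HasDerivAt (fun s => s - s * Φ s - FHP s) (1 - Φ y) y := by
      intro y
      have h1 := ((hasDerivAt_id y).sub ((hasDerivAt_id y).mul (hd y))).sub (FHP_deriv y)
      refine h1.congr_deriv ?_
      simp only [id_eq]
      ring
    have hgt : Tendsto (fun s : ℝ => s - s * Φ s - FHP s) atTop (𝓝 0) := by
      have := hmillsTop.sub FHP_tendsto_top
      rw [sub_zero] at this
      apply this.congr
      intro y
      ring
    have hnn : ∀ y ∈ Ioi a, 0 ≤ 1 - Φ y := fun y _ => by linarith [hΦ1 y]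
    refine ⟨integrableOn_Ioi_deriv_of_nonneg' (fun y _ => hg' y) hnn hgt, ?_⟩
    have := integral_Ioi_of_hasDerivAt_of_nonneg' (fun y _ => hg' y) hnn hgt
    rw [this]
    ring
  -- integral of Φ on Iic a
  have hIicΦ : ∀ a : ℝ, IntegrableOn Φ (Iic a) ∧
      ∫ y in Iic a, Φ y = a * Φ a + FHP a := by
    intro a
    constructor
    · have h := (hIoi1Φ (-a)).1
      have h2 := (MeasurePreserving.integrableOn_comp_preimage
        (Measure.measurePreserving_neg (volume : Measure ℝ))
        (Homeomorph.neg ℝ).measurableEmbedding).2 h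
      have hset : (fun x : ℝ => -x) ⁻¹' Ioi (-a) = Iio a := by
        ext y
        simp
      rw [hset] at h2
      have h3 : IntegrableOn Φ (Iio a) := by
        apply h2.congr_fun _ measurableSet_Iio
        intro y _
        simp only [Function.comp_apply]
        linarith [hsym' y]
      exact (integrableOn_Iic_iff_integrableOn_Iio (by simp)).2 h3
    · calc ∫ y in Iic a, Φ y = ∫ y in Iic a, (fun z => 1 - Φ z) (-y) := by
            apply setIntegral_congr_fun measurableSet_Iic
            intro y _
            simpa using (hsym' y)
        _ = ∫ z in Ioi (-a), (1 - Φ z) := integral_comp_neg_Iic a (fun z => 1 - Φ z)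
        _ = FHP (-a) - (-a) * (1 - Φ (-a)) := (hIoi1Φ (-a)).2
        _ = a * Φ a + FHP a := by
            rw [FHP_even, hsym a]
            ring
  -- the inner integral equals the density
  have hinner : ∀ x : ℝ, (∫ y, (min (Φ x) (Φ y) - Φ x * Φ y)) = FHP x := by
    intro x
    have hfI1 : EqOn (fun y => (1 - Φ x) * Φ y)
        (fun y => min (Φ x) (Φ y) - Φ x * Φ y) (Iic x) := by
      intro y hy
      have h : Φ y ≤ Φ x := hmono hy
      simp only [min_eq_right h]
      ring
    have hfI2 : EqOn (fun y => Φ x * (1 - Φ y))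
        (fun y => min (Φ x) (Φ y) - Φ x * Φ y) (Ioi x) := by
      intro y hy
      have h : Φ x ≤ Φ y := hmono (le_of_lt hy)
      simp only [min_eq_left h]
      ring
    have hi1 : IntegrableOn (fun y => min (Φ x) (Φ y) - Φ x * Φ y) (Iic x) :=
      IntegrableOn.congr_fun (((hIicΦ x).1).const_mul (1 - Φ x)) hfI1 measurableSet_Iic
    have hi2 : IntegrableOn (fun y => min (Φ x) (Φ y) - Φ x * Φ y) (Ioi x) :=
      IntegrableOn.congr_fun (((hIoi1Φ x).1).const_mul (Φ x)) hfI2 measurableSet_Ioi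
    calc ∫ y, (min (Φ x) (Φ y) - Φ x * Φ y)
        = (∫ y in Iic x, (min (Φ x) (Φ y) - Φ x * Φ y))
          + ∫ y in Ioi x, (min (Φ x) (Φ y) - Φ x * Φ y) :=
          (intervalIntegral.integral_Iic_add_Ioi hi1 hi2).symm
      _ = (1 - Φ x) * (x * Φ x + FHP x) + Φ x * (FHP x - x * (1 - Φ x)) := by
          rw [← setIntegral_congr_fun measurableSet_Iic hfI1,
            ← setIntegral_congr_fun measurableSet_Ioi hfI2,
            integral_const_mul, integral_const_mul, (hIicΦ x).2, (hIoi1Φ x).2]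
      _ = FHP x := by ring
  simp only [hinner]
  exact htotal
end
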